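/- For every K > 0 there exist ε₀ ∈ (0, 1/2) and C > 0 such that the following holds: let ε ∈ (0, ε₀] and let w : ℝ² → ℝ be measurable with 0 ≤ w(x) ≤ K/ε² for almost every x, ∫_{ℝ²} w(x) dx = 1, ∫_{ℝ²} (1 + |x|²) w(x) dx ≤ 2 + Kε, and ∫_{ℝ²} ∫_{ℝ²} log(1/|x−y|) 1_{|x−y|≤1} ⟨x⟩ w(x) w(y) dx dy ≥ √2 log(1/ε) − K. Then for every α ∈ (0, 1] there exists a point p* ∈ ℝ² such that ∫_{|x − p*| ≥ ε^{1−α}} ⟨x⟩ w(x) dx ≤ C / (α log(1/ε)). -/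

import Mathlib

open MeasureTheory Real intervalIntegral

/-- Euclidean norm on `ℝ²`. -/
noncomputable def vnorm (x : ℝ × ℝ) : ℝ := Real.sqrt (x.1 ^ 2 + x.2 ^ 2)

/-- Rotation `R_a` on `ℝ²`. -/
noncomputable def vrot (a : ℝ) (x : ℝ × ℝ) : ℝ × ℝ :=
  (x.1 * Real.cos a + x.2 * Real.sin a, -x.1 * Real.sin a + x.2 * Real.cos a)

/-- Japanese bracket `⟨x⟩ = √(1+|x|²)` on `ℝ²`. -/
noncomputable def jap (x : ℝ × ℝ) : ℝ := Real.sqrt (1 + x.1 ^ 2 + x.2 ^ 2)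

/-- The truncated logarithmic potential
`Gw(x) = ∫ log(1/|x−y|) 1_{|x−y|≤1} w(y) dy`. -/
noncomputable def Gfun (w : ℝ × ℝ → ℝ) (x : ℝ × ℝ) : ℝ :=
  ∫ y : ℝ × ℝ, (if vnorm (x - y) ≤ 1 then Real.log (1 / vnorm (x - y)) else 0) * w y

/-! ### Auxiliary material -/

section Aux

open Set

lemma vnorm_nonneg (x : ℝ × ℝ) : 0 ≤ vnorm x := Real.sqrt_nonneg _

lemma continuous_vnorm : Continuous vnorm := by
  apply Real.continuous_sqrt.comp; fun_prop

lemma vnorm_sq (x : ℝ × ℝ) : vnorm x ^ 2 = x.1 ^ 2 + x.2 ^ 2 :=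
  Real.sq_sqrt (by positivity)

lemma vnorm_neg (x : ℝ × ℝ) : vnorm (-x) = vnorm x := by
  simp [vnorm]

lemma vnorm_add_le (a b : ℝ × ℝ) : vnorm (a + b) ≤ vnorm a + vnorm b := by
  have h1 : a.1 * b.1 + a.2 * b.2 ≤ vnorm a * vnorm b := by
    have hv : vnorm a * vnorm b = Real.sqrt ((a.1^2+a.2^2) * (b.1^2+b.2^2)) := by
      rw [vnorm, vnorm, ← Real.sqrt_mul (by positivity)]
    rw [hv]
    rcases le_or_gt (a.1 * b.1 + a.2 * b.2) 0 with h | h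
    · exact h.trans (Real.sqrt_nonneg _)
    · rw [show (a.1 * b.1 + a.2 * b.2) = Real.sqrt ((a.1 * b.1 + a.2 * b.2)^2) from
        (Real.sqrt_sq h.le).symm]
      apply Real.sqrt_le_sqrt
      nlinarith [sq_nonneg (a.1 * b.2 - a.2 * b.1)]
  have h2 : vnorm (a+b) ^ 2 ≤ (vnorm a + vnorm b)^2 := by
    rw [vnorm_sq]
    have := vnorm_sq a; have := vnorm_sq b
    simp only [Prod.fst_add, Prod.snd_add]
    nlinarith
  calc vnorm (a+b) = Real.sqrt (vnorm (a+b) ^2) := (Real.sqrt_sq (vnorm_nonneg _)).symm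
    _ ≤ Real.sqrt ((vnorm a + vnorm b)^2) := Real.sqrt_le_sqrt h2
    _ = vnorm a + vnorm b := Real.sqrt_sq (by have := vnorm_nonneg a; have := vnorm_nonneg b; linarith)

lemma vnorm_sub_le (a b c : ℝ × ℝ) : vnorm (a - c) ≤ vnorm (a - b) + vnorm (b - c) := by
  have h : a - c = (a - b) + (b - c) := by abel
  rw [h]; exact vnorm_add_le _ _

lemma vnorm_sub_comm (a b : ℝ × ℝ) : vnorm (a - b) = vnorm (b - a) := by
  rw [← vnorm_neg (a-b), neg_sub]

lemma abs_fst_le_vnorm (z : ℝ × ℝ) : |z.1| ≤ vnorm z := by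
  rw [← Real.sqrt_sq_eq_abs]; exact Real.sqrt_le_sqrt (by nlinarith [sq_nonneg z.2])
lemma abs_snd_le_vnorm (z : ℝ × ℝ) : |z.2| ≤ vnorm z := by
  rw [← Real.sqrt_sq_eq_abs]; exact Real.sqrt_le_sqrt (by nlinarith [sq_nonneg z.1])

lemma vol_disc_le (s : ℝ) (hs : 0 ≤ s) :
    volume {z : ℝ × ℝ | vnorm z < s} ≤ ENNReal.ofReal (4 * s^2) := by
  have hsub : {z : ℝ × ℝ | vnorm z < s} ⊆ Ioo (-s) s ×ˢ Ioo (-s) s := by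
    intro z hz
    simp only [mem_setOf_eq] at hz
    have h1 := abs_lt.mp (lt_of_le_of_lt (abs_fst_le_vnorm z) hz)
    have h2 := abs_lt.mp (lt_of_le_of_lt (abs_snd_le_vnorm z) hz)
    exact ⟨⟨h1.1, h1.2⟩, ⟨h2.1, h2.2⟩⟩
  calc volume {z : ℝ × ℝ | vnorm z < s} ≤ volume (Ioo (-s) s ×ˢ Ioo (-s) s) :=
        measure_mono hsub
    _ = ENNReal.ofReal (4 * s^2) := by
        rw [Measure.volume_eq_prod, Measure.prod_prod, Real.volume_Ioo,
          ← ENNReal.ofReal_mul (by linarith)]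
        ring_nf

/-- The positive part of the logarithmic kernel at scale `ρ`. -/
noncomputable def h2 (ρ : ℝ) (z : ℝ × ℝ) : ℝ := max (Real.log (ρ / vnorm z)) 0

lemma h2_nonneg (ρ : ℝ) (z : ℝ × ℝ) : 0 ≤ h2 ρ z := le_max_right _ _

lemma h2_meas (ρ : ℝ) : Measurable (h2 ρ) := by
  apply Measurable.max _ measurable_const
  exact Real.measurable_log.comp (measurable_const.div continuous_vnorm.measurable)

lemma h2_lintegral (ρ : ℝ) (hρ : 0 < ρ) :
    ∫⁻ z : ℝ × ℝ, ENNReal.ofReal (h2 ρ z) ≤ ENNReal.ofReal (4 * ρ^2) := by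
  rw [lintegral_eq_lintegral_meas_lt volume (Filter.Eventually.of_forall (h2_nonneg ρ))
    (h2_meas ρ).aemeasurable]
  have key : ∀ t ∈ Ioi (0:ℝ), volume {z : ℝ × ℝ | t < h2 ρ z} ≤
      ENNReal.ofReal (4 * ρ^2 * Real.exp (-t)) := by
    intro t ht
    simp only [mem_Ioi] at ht
    have hsub : {z : ℝ × ℝ | t < h2 ρ z} ⊆ {z : ℝ × ℝ | vnorm z < ρ * Real.exp (-t)} := by
      intro z hz
      simp only [mem_setOf_eq, h2, lt_max_iff] at hz ⊢
      rcases hz with hz | hz; swap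
      · linarith
      have hv : 0 < vnorm z := by
        rcases (vnorm_nonneg z).lt_or_eq with h | h
        · exact h
        · exfalso; rw [← h] at hz; simp at hz; linarith
      have hq : 0 < ρ / vnorm z := by positivity
      have hee := Real.exp_lt_exp.mpr hz
      rw [Real.exp_log hq] at hee
      have h3 : vnorm z * Real.exp t < ρ := by
        rw [lt_div_iff₀ hv] at hee; nlinarith [Real.exp_pos t]
      calc vnorm z = vnorm z * Real.exp t * Real.exp (-t) := by
            rw [mul_assoc, ← Real.exp_add]; simp
        _ < ρ * Real.exp (-t) := by
            apply mul_lt_mul_of_pos_right h3 (Real.exp_pos _)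
    calc volume {z : ℝ × ℝ | t < h2 ρ z} ≤ volume {z : ℝ × ℝ | vnorm z < ρ * Real.exp (-t)} :=
          measure_mono hsub
      _ ≤ ENNReal.ofReal (4 * (ρ * Real.exp (-t))^2) := vol_disc_le _ (by positivity)
      _ ≤ ENNReal.ofReal (4 * ρ^2 * Real.exp (-t)) := by
          apply ENNReal.ofReal_le_ofReal
          have he : Real.exp (-t) ≤ 1 := Real.exp_le_one_iff.mpr (by linarith)
          nlinarith [Real.exp_pos (-t), sq_nonneg ρ]
  calc ∫⁻ t in Ioi (0:ℝ), volume {z : ℝ × ℝ | t < h2 ρ z}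
      ≤ ∫⁻ t in Ioi (0:ℝ), ENNReal.ofReal (4 * ρ^2 * Real.exp (-t)) := by
        apply setLIntegral_mono' measurableSet_Ioi key
    _ = ENNReal.ofReal (4 * ρ^2) * ∫⁻ t in Ioi (0:ℝ), ENNReal.ofReal (Real.exp (-t)) := by
        rw [← lintegral_const_mul' _ _ ENNReal.ofReal_ne_top]
        congr 1; funext t
        rw [← ENNReal.ofReal_mul (by positivity)]
    _ ≤ ENNReal.ofReal (4 * ρ^2) := by
        have hint : IntegrableOn (fun t : ℝ => Real.exp (-t)) (Ioi 0) := by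
          have := exp_neg_integrableOn_Ioi 0 one_pos
          simpa using this
        have hI : ∫⁻ t in Ioi (0:ℝ), ENNReal.ofReal (Real.exp (-t)) = ENNReal.ofReal 1 := by
          rw [← ofReal_integral_eq_lintegral_ofReal hint
            (Filter.Eventually.of_forall fun t => (Real.exp_pos _).le)]
          rw [integral_exp_neg_Ioi_zero]
        rw [hI]
        simp

lemma h2_integrable (ρ : ℝ) (hρ : 0 < ρ) : Integrable (h2 ρ) := by
  refine ⟨(h2_meas ρ).aestronglyMeasurable, ?_⟩
  rw [hasFiniteIntegral_iff_ofReal (Filter.Eventually.of_forall (h2_nonneg ρ))]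
  exact lt_of_le_of_lt (h2_lintegral ρ hρ) ENNReal.ofReal_lt_top

lemma h2_integral_le (ρ : ℝ) (hρ : 0 < ρ) : ∫ z : ℝ × ℝ, h2 ρ z ≤ 4 * ρ^2 := by
  rw [integral_eq_lintegral_of_nonneg_ae (Filter.Eventually.of_forall (h2_nonneg ρ))
    (h2_meas ρ).aestronglyMeasurable]
  calc (∫⁻ z : ℝ × ℝ, ENNReal.ofReal (h2 ρ z)).toReal
      ≤ (ENNReal.ofReal (4 * ρ^2)).toReal :=
        ENNReal.toReal_mono ENNReal.ofReal_ne_top (h2_lintegral ρ hρ)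
    _ = 4 * ρ^2 := ENNReal.toReal_ofReal (by positivity)

lemma h2_comp_integrable (ρ : ℝ) (hρ : 0 < ρ) (x : ℝ × ℝ) :
    Integrable (fun y : ℝ × ℝ => h2 ρ (x - y)) := (h2_integrable ρ hρ).comp_sub_left x

lemma h2_comp_integral (ρ : ℝ) (x : ℝ × ℝ) :
    ∫ y : ℝ × ℝ, h2 ρ (x - y) = ∫ z : ℝ × ℝ, h2 ρ z :=
  integral_sub_left_eq_self (h2 ρ) volume x

/-- The truncated logarithmic kernel. -/
noncomputable def ker (x y : ℝ × ℝ) : ℝ :=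
  if vnorm (x - y) ≤ 1 then Real.log (1 / vnorm (x - y)) else 0

lemma ker_nonneg (x y : ℝ × ℝ) : 0 ≤ ker x y := by
  unfold ker
  split_ifs with h
  · rcases (vnorm_nonneg (x-y)).lt_or_eq with h0 | h0
    · exact Real.log_nonneg (one_le_one_div h0 h)
    · rw [← h0]; simp
  · exact le_refl 0

lemma ball_meas (x : ℝ × ℝ) (δ : ℝ) : MeasurableSet {y : ℝ × ℝ | vnorm (x - y) ≤ δ} := by
  have h : Continuous fun y : ℝ × ℝ => vnorm (x - y) :=
    continuous_vnorm.comp (continuous_const.sub continuous_id)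
  exact measurableSet_le h.measurable measurable_const

lemma G_meas {w : ℝ × ℝ → ℝ} (hwm : Measurable w) :
    Measurable (fun x : ℝ × ℝ => ∫ y : ℝ × ℝ, ker x y * w y) := by
  have hker : Measurable (fun p : (ℝ × ℝ) × (ℝ × ℝ) => ker p.1 p.2 * w p.2) := by
    apply Measurable.mul _ (hwm.comp measurable_snd)
    unfold ker
    have hc : Continuous (fun p : (ℝ × ℝ) × (ℝ × ℝ) => vnorm (p.1 - p.2)) :=
      continuous_vnorm.comp (continuous_fst.sub continuous_snd)
    apply Measurable.ite (measurableSet_le hc.measurable measurable_const)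
    · exact Real.measurable_log.comp (measurable_const.div hc.measurable)
    · exact measurable_const
  exact (StronglyMeasurable.integral_prod_right' (ν := volume)
    hker.stronglyMeasurable).measurable

/-- Main potential estimate. -/
lemma potential_bound {B : ℝ} {w : ℝ × ℝ → ℝ}
    (hwm : Measurable w) (hw0 : ∀ᵐ y : ℝ × ℝ, 0 ≤ w y ∧ w y ≤ B) (hwi : Integrable w)
    (hw1 : (∫ y : ℝ × ℝ, w y) = 1)
    {ρ δ : ℝ} (hρ0 : 0 < ρ) (hρ1 : ρ < 1) (hρδ : ρ ≤ δ) (hδ1 : δ ≤ 1)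
    (hρB : B * (4 * ρ^2) ≤ 1) (hB0 : 0 ≤ B) (x : ℝ × ℝ) :
    (∫ y : ℝ × ℝ, ker x y * w y) ≤
      Real.log (1/δ) + (Real.log (1/ρ) - Real.log (1/δ)) *
        (∫ y in {y : ℝ × ℝ | vnorm (x - y) ≤ δ}, w y) + 1 := by
  have hδ0 : 0 < δ := lt_of_lt_of_le hρ0 hρδ
  have hlogδ : 0 ≤ Real.log (1/δ) := Real.log_nonneg (one_le_one_div hδ0 hδ1)
  have hlogρ : 0 ≤ Real.log (1/ρ) := Real.log_nonneg (one_le_one_div hρ0 hρ1.le)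
  have hlogρδ : Real.log (1/δ) ≤ Real.log (1/ρ) :=
    Real.log_le_log (by positivity) (by apply one_div_le_one_div_of_le hρ0 hρδ)
  set c2 : ℝ := Real.log (1/ρ) - Real.log (1/δ) with hc2
  set f1 : (ℝ × ℝ) → ℝ := fun y => (if vnorm (x - y) ≤ 1 then Real.log (1/δ) else 0) * w y with hf1
  set f2 : (ℝ × ℝ) → ℝ := fun y => (if vnorm (x - y) ≤ δ then c2 else 0) * w y with hf2
  set f3 : (ℝ × ℝ) → ℝ := fun y => h2 ρ (x - y) * w y with hf3
  have hker : ∀ y : ℝ × ℝ, ker x y ≤ (if vnorm (x - y) ≤ 1 then Real.log (1/δ) else 0)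
      + (if vnorm (x - y) ≤ δ then c2 else 0) + h2 ρ (x - y) := by
    intro y
    have hh2 := h2_nonneg ρ (x - y)
    unfold ker
    by_cases hrδ : vnorm (x - y) ≤ δ
    · have hr1 : vnorm (x - y) ≤ 1 := hrδ.trans hδ1
      simp only [if_pos hrδ, if_pos hr1]
      rcases (vnorm_nonneg (x - y)).lt_or_eq with h0 | h0
      · have hlog : Real.log (ρ / vnorm (x - y)) ≤ h2 ρ (x - y) := le_max_left _ _
        rw [Real.log_div (ne_of_gt hρ0) (ne_of_gt h0)] at hlog
        rw [Real.log_div one_ne_zero (ne_of_gt h0), Real.log_one]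
        have hlρ : Real.log (1/ρ) = - Real.log ρ := by
          rw [Real.log_div one_ne_zero (ne_of_gt hρ0), Real.log_one]; ring
        rw [hc2]; linarith
      · rw [← h0]; simp only [div_zero, Real.log_zero]
        rw [hc2]; linarith
    · by_cases hr1 : vnorm (x - y) ≤ 1
      · simp only [if_pos hr1, if_neg hrδ]
        push_neg at hrδ
        have h0 : 0 < vnorm (x - y) := lt_trans hδ0 hrδ
        have hll : Real.log (1 / vnorm (x - y)) ≤ Real.log (1/δ) :=
          Real.log_le_log (one_div_pos.mpr h0) (one_div_le_one_div_of_le hδ0 hrδ.le)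
        linarith
      · simp only [if_neg hr1, if_neg hrδ]; linarith
  have hS1 := ball_meas x 1
  have hSδ := ball_meas x δ
  have hf1eq : f1 = Set.indicator {y : ℝ × ℝ | vnorm (x - y) ≤ 1}
      (fun y => Real.log (1/δ) * w y) := by
    funext y
    rw [hf1, Set.indicator_apply]
    simp only [mem_setOf_eq]
    split_ifs <;> simp
  have hf2eq : f2 = Set.indicator {y : ℝ × ℝ | vnorm (x - y) ≤ δ} (fun y => c2 * w y) := by
    funext y
    rw [hf2, Set.indicator_apply]
    simp only [mem_setOf_eq]
    split_ifs <;> simp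
  have hi1 : Integrable f1 := by rw [hf1eq]; exact (hwi.const_mul _).indicator hS1
  have hi2 : Integrable f2 := by rw [hf2eq]; exact (hwi.const_mul _).indicator hSδ
  have hf3bound : ∀ᵐ y : ℝ × ℝ, ‖f3 y‖ ≤ B * h2 ρ (x - y) := by
    filter_upwards [hw0] with y hy
    rw [hf3, Real.norm_eq_abs, abs_of_nonneg (mul_nonneg (h2_nonneg _ _) hy.1)]
    exact mul_le_mul_of_nonneg_left hy.2 (h2_nonneg _ _) |>.trans_eq (mul_comm _ _)
  have hi3 : Integrable f3 := by
    apply Integrable.mono' ((h2_comp_integrable ρ hρ0 x).const_mul B)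
    · exact (((h2_meas ρ).comp (measurable_const.sub measurable_id)).mul hwm).aestronglyMeasurable
    · exact hf3bound
  have hmain : (∫ y : ℝ × ℝ, ker x y * w y) ≤ ∫ y : ℝ × ℝ, (f1 y + f2 y + f3 y) := by
    apply integral_mono_of_nonneg
    · filter_upwards [hw0] with y hy
      exact mul_nonneg (ker_nonneg x y) hy.1
    · exact (hi1.add hi2).add hi3
    · filter_upwards [hw0] with y hy
      have h' : ker x y * w y ≤ ((if vnorm (x - y) ≤ 1 then Real.log (1/δ) else 0)
          + (if vnorm (x - y) ≤ δ then c2 else 0) + h2 ρ (x - y)) * w y :=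
        mul_le_mul_of_nonneg_right (hker y) hy.1
      calc ker x y * w y ≤ _ := h'
        _ = f1 y + f2 y + f3 y := by rw [hf1, hf2, hf3]; ring
  have h12 : Integrable (fun y : ℝ × ℝ => f1 y + f2 y) := hi1.add hi2
  rw [integral_add h12 hi3, integral_add hi1 hi2] at hmain
  have he1 : (∫ y : ℝ × ℝ, f1 y) ≤ Real.log (1/δ) := by
    rw [hf1eq, MeasureTheory.integral_indicator hS1, MeasureTheory.integral_const_mul]
    have h1le : (∫ y in {y : ℝ × ℝ | vnorm (x - y) ≤ 1}, w y) ≤ 1 := by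
      rw [← hw1]
      exact setIntegral_le_integral hwi (by filter_upwards [hw0] with y hy using hy.1)
    calc Real.log (1/δ) * (∫ y in {y : ℝ × ℝ | vnorm (x - y) ≤ 1}, w y)
        ≤ Real.log (1/δ) * 1 := mul_le_mul_of_nonneg_left h1le hlogδ
      _ = Real.log (1/δ) := mul_one _
  have he2 : (∫ y : ℝ × ℝ, f2 y) = c2 * ∫ y in {y : ℝ × ℝ | vnorm (x - y) ≤ δ}, w y := by
    rw [hf2eq, MeasureTheory.integral_indicator hSδ, MeasureTheory.integral_const_mul]
  have he3 : (∫ y : ℝ × ℝ, f3 y) ≤ 1 := by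
    have hm : (∫ y : ℝ × ℝ, f3 y) ≤ ∫ y : ℝ × ℝ, B * h2 ρ (x - y) := by
      apply integral_mono_ae hi3 ((h2_comp_integrable ρ hρ0 x).const_mul B)
      filter_upwards [hf3bound] with y hy
      exact (le_abs_self _).trans hy
    rw [MeasureTheory.integral_const_mul, h2_comp_integral] at hm
    calc (∫ y : ℝ × ℝ, f3 y) ≤ B * ∫ z : ℝ × ℝ, h2 ρ z := hm
      _ ≤ B * (4 * ρ^2) := mul_le_mul_of_nonneg_left (h2_integral_le ρ hρ0) hB0
      _ ≤ 1 := hρB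
  rw [hc2] at he2
  linarith [hmain, he1, he3, he2.le, he2.ge]

end Aux

set_option maxHeartbeats 1000000 in
/-- concentration of the vorticity: under mass, second-moment,
boundedness and energy bounds, for every `α ∈ (0,1]` the ⟨x⟩-weighted mass
outside a ball of radius `ε^{1−α}` around some point `p*` is at most
`C/(α log(1/ε))`. -/
theorem stmt_17 : ∀ K > (0:ℝ), ∃ ε₀ ∈ Set.Ioo (0:ℝ) (1/2), ∃ C > (0:ℝ),
    ∀ ε : ℝ, 0 < ε → ε ≤ ε₀ →
    ∀ w : ℝ × ℝ → ℝ, Measurable w →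
    (∀ᵐ x : ℝ × ℝ, 0 ≤ w x ∧ w x ≤ K / ε ^ 2) →
    Integrable w → (∫ x : ℝ × ℝ, w x) = 1 →
    Integrable (fun x : ℝ × ℝ => (1 + vnorm x ^ 2) * w x) →
    (∫ x : ℝ × ℝ, (1 + vnorm x ^ 2) * w x) ≤ 2 + K * ε →
    Real.sqrt 2 * Real.log (1 / ε) - K ≤
      (∫ x : ℝ × ℝ, ∫ y : ℝ × ℝ,
        (if vnorm (x - y) ≤ 1 then Real.log (1 / vnorm (x - y)) else 0)
          * jap x * w x * w y) →
    ∀ α : ℝ, 0 < α → α ≤ 1 →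
    ∃ pstar : ℝ × ℝ,
      (∫ x in {x : ℝ × ℝ | ε ^ (1 - α) ≤ vnorm (x - pstar)}, jap x * w x)
        ≤ C / (α * Real.log (1 / ε)) := by
  intro K hK
  set cK : ℝ := Real.log (max 1 (2*Real.sqrt K)) with hcKdef
  have hcK : 0 ≤ cK := Real.log_nonneg (le_max_left _ _)
  clear_value cK
  set c₁ : ℝ := cK + 1 with hc₁def
  have hc₁1 : 1 ≤ c₁ := by rw [hc₁def]; linarith only [hcK]
  clear_value c₁
  set T : ℝ := 16*K + 16*cK + 32 with hTdef
  have hT0 : 0 < T := by rw [hTdef]; linarith only [hK, hcK]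
  clear_value T
  set N : ℝ := (K+2)*c₁ + 2*K with hNdef
  have hN0 : 0 ≤ N := by
    rw [hNdef]
    have h1 : 0 ≤ (K+2)*c₁ :=
      mul_nonneg (by linarith only [hK]) (by linarith only [hc₁1])
    linarith only [h1, hK]
  clear_value N
  have hCpos : (0:ℝ) < (K+2)*T + 8*N + 1 := by
    have h1 : 0 ≤ (K+2)*T := mul_nonneg (by linarith only [hK]) hT0.le
    linarith only [h1, hN0]
  refine ⟨1/4, ⟨by norm_num, by norm_num⟩, (K+2)*T + 8*N + 1, hCpos, ?_⟩
  set C : ℝ := (K+2)*T + 8*N + 1 with hCdef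
  clear_value C
  intro ε hε0 hε1 w hwm hw0 hwi hw1 hw2i hw2 hEn α hα0 hα1
  set s : ℝ := Real.sqrt 2 with hsdef
  have hs2 : s^2 = 2 := Real.sq_sqrt (by norm_num)
  have hs0 : 0 ≤ s := Real.sqrt_nonneg 2
  clear_value s
  have hs1 : 1 ≤ s := by nlinarith only [hs2, hs0]
  have hsle2 : s ≤ 2 := by nlinarith only [hs2, hs0]
  set L : ℝ := Real.log (1/ε) with hLdef0
  have hLneg : L = -Real.log ε := by rw [hLdef0, one_div, Real.log_inv]
  clear_value L
  have hL4 : Real.log 4 ≤ L := by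
    rw [hLdef0]
    apply Real.log_le_log (by norm_num)
    rw [le_div_iff₀ hε0]; linarith only [hε1]
  have h1log4 : 1 < Real.log 4 := by
    rw [Real.lt_log_iff_exp_lt (by norm_num)]
    calc Real.exp 1 < 2.7182818286 := Real.exp_one_lt_d9
      _ < 4 := by norm_num
  have hL1 : 1 < L := lt_of_lt_of_le h1log4 hL4
  have hεL : ε * L ≤ 1 := by
    have h := Real.log_le_sub_one_of_pos (show (0:ℝ) < 1/ε by positivity)
    rw [← hLdef0] at h
    have h2 : ε * L ≤ ε * (1/ε - 1) := mul_le_mul_of_nonneg_left h hε0.le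
    have h3 : ε * (1/ε - 1) = 1 - ε := by field_simp
    linarith only [h2, h3, hε0]
  have hB0 : (0:ℝ) ≤ K / ε^2 := by positivity
  set M : ℝ := max 1 (2*Real.sqrt K) with hMdef
  have hM1 : 1 ≤ M := le_max_left _ _
  have hM0 : 0 < M := lt_of_lt_of_le one_pos hM1
  have hMK : 2*Real.sqrt K ≤ M := hMdef ▸ le_max_right _ _
  clear_value M
  set ρ : ℝ := ε / M with hρdef
  have hρ0 : 0 < ρ := div_pos hε0 hM0
  have hρε : ρ ≤ ε := div_le_self hε0.le hM1
  clear_value ρ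
  have hρ1 : ρ < 1 := lt_of_le_of_lt (hρε.trans hε1) (by norm_num)
  have hlogρ : Real.log (1/ρ) = L + cK := by
    rw [hρdef, one_div_div, Real.log_div hM0.ne' hε0.ne']
    linarith only [hLneg, hcKdef]
  have hρB : K / ε^2 * (4 * ρ^2) ≤ 1 := by
    have h2 := mul_self_le_mul_self (by positivity) hMK
    have hM2 : 4*K ≤ M^2 := by nlinarith only [h2, Real.sq_sqrt hK.le]
    have heq : K / ε^2 * (4 * ρ^2) = 4*K/M^2 := by
      rw [hρdef]; field_simp
    rw [heq, div_le_one (pow_pos hM0 2)]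
    linarith only [hM2]
  -- G and its properties
  set G : (ℝ × ℝ) → ℝ := fun x => ∫ y : ℝ × ℝ, ker x y * w y with hGdef
  have hGm : Measurable G := G_meas hwm
  have hG0 : ∀ x, 0 ≤ G x := by
    intro x
    apply MeasureTheory.integral_nonneg_of_ae
    filter_upwards [hw0] with y hy
    exact mul_nonneg (ker_nonneg x y) hy.1
  have hGle : ∀ x, G x ≤ L + c₁ := by
    intro x
    have hpb := potential_bound hwm hw0 hwi hw1 hρ0 hρ1 hρ1.le le_rfl hρB hB0 x
    have hone : Real.log ((1:ℝ)/1) = 0 := by norm_num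
    rw [hone, hlogρ] at hpb
    have hm1le : (∫ y in {y : ℝ × ℝ | vnorm (x - y) ≤ 1}, w y) ≤ 1 := by
      rw [← hw1]
      exact setIntegral_le_integral hwi (by filter_upwards [hw0] with y hy using hy.1)
    have hlogρnn : 0 ≤ L + cK := by linarith only [hcK, hL1]
    have hGx : G x = ∫ y : ℝ × ℝ, ker x y * w y := rfl
    rw [hGx]
    have hq : (L + cK) * (∫ y in {y : ℝ × ℝ | vnorm (x - y) ≤ 1}, w y) ≤ (L + cK) * 1 :=
      mul_le_mul_of_nonneg_left hm1le hlogρnn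
    rw [hc₁def]
    linarith only [hpb, hq]
  -- jap facts
  have hjapm : Measurable jap := by
    apply (Real.continuous_sqrt.comp (by fun_prop : Continuous
      (fun x : ℝ × ℝ => 1 + x.1^2 + x.2^2))).measurable
  have hjap_sq : ∀ x : ℝ × ℝ, jap x ^ 2 = 1 + vnorm x ^ 2 := by
    intro x
    rw [vnorm_sq, jap, Real.sq_sqrt (by positivity)]; ring
  have hjap0 : ∀ x : ℝ × ℝ, 0 ≤ jap x := fun x => Real.sqrt_nonneg _
  have hjap1 : ∀ x : ℝ × ℝ, 1 ≤ jap x := by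
    intro x; nlinarith only [hjap_sq x, hjap0 x, sq_nonneg (vnorm x)]
  have hjaple : ∀ x : ℝ × ℝ, jap x ≤ 1 + vnorm x ^ 2 := by
    intro x; nlinarith only [hjap_sq x, hjap1 x]
  have hjw0 : ∀ᵐ x : ℝ × ℝ, 0 ≤ jap x * w x := by
    filter_upwards [hw0] with x hx using mul_nonneg (hjap0 x) hx.1
  have hjw_int : Integrable (fun x : ℝ × ℝ => jap x * w x) := by
    apply Integrable.mono' hw2i (hjapm.mul hwm).aestronglyMeasurable
    filter_upwards [hw0] with x hx
    rw [Real.norm_eq_abs, Pi.mul_apply, abs_of_nonneg (mul_nonneg (hjap0 x) hx.1)]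
    exact mul_le_mul_of_nonneg_right (hjaple x) hx.1
  set m : ℝ := ∫ x : ℝ × ℝ, jap x * w x with hmdef
  have hm0 : 0 ≤ m := MeasureTheory.integral_nonneg_of_ae hjw0
  clear_value m
  have h2s0 : (0:ℝ) < 2*s := by linarith only [hs1]
  have hm_le : m ≤ s + K*ε := by
    rw [hmdef]
    have hpt : ∀ᵐ x : ℝ × ℝ, jap x * w x ≤ (1/(2*s)) * (2*w x + (1+vnorm x^2)*w x) := by
      filter_upwards [hw0] with x hx
      have h1 : 2*s*jap x ≤ 2 + (1 + vnorm x^2) := by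
        nlinarith only [sq_nonneg (jap x - s), hjap_sq x, hs2]
      have h2 : 2*s*jap x*w x ≤ (2 + (1 + vnorm x^2))*w x :=
        mul_le_mul_of_nonneg_right h1 hx.1
      rw [show (1/(2*s)) * (2*w x + (1+vnorm x^2)*w x)
        = (2*w x + (1+vnorm x^2)*w x)/(2*s) by ring, le_div_iff₀ h2s0]
      linarith only [h2]
    have hint2 : Integrable (fun x : ℝ × ℝ => (1/(2*s)) * (2*w x + (1+vnorm x^2)*w x)) :=
      ((hwi.const_mul 2).add hw2i).const_mul _
    have hmono := integral_mono_ae hjw_int hint2 hpt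
    rw [MeasureTheory.integral_const_mul, integral_add (hwi.const_mul 2) hw2i, MeasureTheory.integral_const_mul, hw1] at hmono
    have h4 : (1/(2*s)) * (2*1 + ∫ x : ℝ × ℝ, (1+vnorm x^2)*w x)
        ≤ (1/(2*s)) * (4 + K*ε) := by
      apply mul_le_mul_of_nonneg_left (by linarith only [hw2])
        (le_of_lt (one_div_pos.mpr h2s0))
    have h5 : (1/(2*s)) * (4 + K*ε) ≤ s + K*ε := by
      rw [show (1/(2*s)) * (4 + K*ε) = (4 + K*ε)/(2*s) by ring, div_le_iff₀ h2s0]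
      nlinarith only [hs2, hs1, mul_nonneg hK.le hε0.le]
    calc (∫ x : ℝ × ℝ, jap x * w x)
        ≤ (1/(2*s)) * (2*1 + ∫ x : ℝ × ℝ, (1+vnorm x^2)*w x) := hmono
      _ ≤ s + K*ε := le_trans h4 h5
  -- rewrite the energy
  have hE : s*L - K ≤ ∫ x : ℝ × ℝ, jap x * w x * G x := by
    have hinner : ∀ x : ℝ × ℝ, (∫ y : ℝ × ℝ,
        (if vnorm (x - y) ≤ 1 then Real.log (1 / vnorm (x - y)) else 0)
          * jap x * w x * w y) = jap x * w x * G x := by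
      intro x
      have hfeq : (fun y : ℝ × ℝ => (if vnorm (x - y) ≤ 1 then
          Real.log (1 / vnorm (x - y)) else 0) * jap x * w x * w y)
          = fun y : ℝ × ℝ => (jap x * w x) * (ker x y * w y) := by
        funext y; unfold ker; ring
      rw [hfeq, MeasureTheory.integral_const_mul]
    simp only [hinner] at hEn
    exact hEn
  set A : Set (ℝ × ℝ) := {x | (1 - α/8)*L ≤ G x} with hAdef
  have hAm : MeasurableSet A := measurableSet_le measurable_const hGm
  set a : ℝ := ∫ x in A, jap x * w x with hadef
  set b : ℝ := ∫ x in Aᶜ, jap x * w x with hbdef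
  have hab : a + b = m := by
    rw [hadef, hbdef, hmdef]; exact integral_add_compl hAm hjw_int
  have hb0 : 0 ≤ b := by
    rw [hbdef]; exact MeasureTheory.integral_nonneg_of_ae (ae_restrict_of_ae hjw0)
  clear_value a b
  have hθ0 : 0 ≤ (1 - α/8)*L :=
    mul_nonneg (by linarith only [hα1]) (by linarith only [hL1])
  have hαL8 : 0 ≤ (α/8)*L :=
    mul_nonneg (by linarith only [hα0]) (by linarith only [hL1])
  have hco0 : 0 < (α/8)*L + c₁ := by linarith only [hαL8, hc₁1]
  have hkey : s*L - K ≤ (1 - α/8)*L*m + ((α/8)*L + c₁)*a := by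
    have hmaj : ∀ᵐ x : ℝ × ℝ, jap x * w x * G x ≤ (1 - α/8)*L*(jap x * w x)
        + ((α/8)*L + c₁) * (A.indicator (fun x => jap x * w x) x) := by
      filter_upwards [hw0] with x hx
      by_cases hxA : x ∈ A
      · rw [Set.indicator_of_mem hxA]
        have h1 : jap x * w x * G x ≤ jap x * w x * (L + c₁) :=
          mul_le_mul_of_nonneg_left (hGle x) (mul_nonneg (hjap0 x) hx.1)
        calc jap x * w x * G x ≤ jap x * w x * (L + c₁) := h1
          _ = (1 - α/8)*L*(jap x * w x) + ((α/8)*L + c₁)*(jap x * w x) := by ring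
      · rw [Set.indicator_of_notMem hxA, mul_zero, add_zero]
        have hGθ : G x < (1 - α/8)*L := by
          by_contra hcon; push_neg at hcon; exact hxA hcon
        calc jap x * w x * G x ≤ jap x * w x * ((1 - α/8)*L) :=
              mul_le_mul_of_nonneg_left hGθ.le (mul_nonneg (hjap0 x) hx.1)
          _ = (1 - α/8)*L*(jap x * w x) := by ring
    have hmaj_int : Integrable (fun x : ℝ × ℝ => (1 - α/8)*L*(jap x * w x)
        + ((α/8)*L + c₁) * (A.indicator (fun x => jap x * w x) x)) :=
      (hjw_int.const_mul _).add ((hjw_int.indicator hAm).const_mul _)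
    have hm2 : (∫ x : ℝ × ℝ, jap x * w x * G x) ≤ (1 - α/8)*L*m + ((α/8)*L + c₁)*a := by
      rw [hmdef, hadef]
      have hmono := integral_mono_of_nonneg
        (by filter_upwards [hw0] with x hx
            exact mul_nonneg (mul_nonneg (hjap0 x) hx.1) (hG0 x))
        hmaj_int hmaj
      rwa [integral_add (hjw_int.const_mul _) ((hjw_int.indicator hAm).const_mul _),
        MeasureTheory.integral_const_mul, MeasureTheory.integral_const_mul, MeasureTheory.integral_indicator hAm] at hmono
    linarith only [hE, hm2]
  have hαL0 : 0 < α * L := mul_pos hα0 (by linarith only [hL1])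
  have hKε : K*ε ≤ K := by nlinarith only [hK, hε0, hε1]
  by_cases hcase : α * L ≤ T
  · -- trivial case : the whole mass is small enough
    refine ⟨(0,0), ?_⟩
    have h1 : (∫ x in {x : ℝ × ℝ | ε ^ (1 - α) ≤ vnorm (x - (0,0))}, jap x * w x) ≤ m := by
      rw [hmdef]; exact setIntegral_le_integral hjw_int hjw0
    have hm2K : m ≤ 2 + K := by linarith only [hm_le, hsle2, hKε]
    rw [le_div_iff₀ hαL0]
    calc (∫ x in {x : ℝ × ℝ | ε ^ (1 - α) ≤ vnorm (x - (0,0))}, jap x * w x) * (α*L)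
        ≤ (2+K)*(α*L) := mul_le_mul_of_nonneg_right (h1.trans hm2K) hαL0.le
      _ ≤ (2+K)*T := mul_le_mul_of_nonneg_left hcase (by linarith only [hK])
      _ ≤ C := by rw [hCdef]; linarith only [hN0]
  · -- main case
    push_neg at hcase
    set δα : ℝ := ε ^ ((1:ℝ) - α/2) with hδαdef
    have hδ1 : δα ≤ 1 :=
      Real.rpow_le_one hε0.le (by linarith only [hε1]) (by linarith only [hα1])
    have hεδ : ε ≤ δα := by
      calc ε = ε ^ (1:ℝ) := (Real.rpow_one ε).symm
        _ ≤ δα := Real.rpow_le_rpow_of_exponent_ge hε0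
            (by linarith only [hε1]) (by linarith only [hα0])
    clear_value δα
    have hρδ : ρ ≤ δα := hρε.trans hεδ
    have hlogδ : Real.log (1/δα) = (1 - α/2)*L := by
      rw [hδαdef, one_div, Real.log_inv, Real.log_rpow hε0, hLneg]; ring
    have hconc : ∀ x ∈ A, 1/2 < ∫ y in {y : ℝ × ℝ | vnorm (x - y) ≤ δα}, w y := by
      intro x hxA
      have hpb := potential_bound hwm hw0 hwi hw1 hρ0 hρ1 hρδ hδ1 hρB hB0 x
      rw [hlogδ, hlogρ] at hpb
      have hGx : (1 - α/8)*L ≤ ∫ y : ℝ × ℝ, ker x y * w y := hxA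
      by_contra hhalf
      push_neg at hhalf
      have hco' : 0 ≤ (α/2)*L :=
        mul_nonneg (by linarith only [hα0]) (by linarith only [hL1])
      have hco : 0 ≤ L + cK - (1 - α/2)*L := by linarith only [hco', hcK]
      have hmm := mul_le_mul_of_nonneg_left hhalf hco
      linarith only [hpb, hGx, hmm, hcase, hTdef, hcK, hK]
    have hpair : ∀ x ∈ A, ∀ x' ∈ A, vnorm (x - x') ≤ 2*δα := by
      intro x hx x' hx'
      by_contra hfar
      push_neg at hfar
      have hdisj : Disjoint {y : ℝ × ℝ | vnorm (x - y) ≤ δα}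
          {y : ℝ × ℝ | vnorm (x' - y) ≤ δα} := by
        rw [Set.disjoint_left]
        intro y hy hy'
        have ht := vnorm_sub_le x y x'
        rw [vnorm_sub_comm y x'] at ht
        simp only [Set.mem_setOf_eq] at hy hy'
        linarith only [ht, hy, hy', hfar]
      have hunion := setIntegral_union hdisj (ball_meas x' δα)
        hwi.integrableOn hwi.integrableOn (f := w) (μ := volume)
      have hle : (∫ y in ({y : ℝ × ℝ | vnorm (x - y) ≤ δα} ∪
          {y : ℝ × ℝ | vnorm (x' - y) ≤ δα}), w y) ≤ 1 := by
        rw [← hw1]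
        exact setIntegral_le_integral hwi
          (by filter_upwards [hw0] with y hy using hy.1)
      have h1 := hconc x hx
      have h2 := hconc x' hx'
      rw [hunion] at hle
      linarith only [h1, h2, hle]
    have ha_pos : 0 < a := by
      by_contra hcon
      push_neg at hcon
      have h1 : ((α/8)*L + c₁)*a ≤ 0 := mul_nonpos_of_nonneg_of_nonpos hco0.le hcon
      have h2 : (1 - α/8)*L*m ≤ (1 - α/8)*L*(s + K*ε) :=
        mul_le_mul_of_nonneg_left hm_le hθ0
      have h6 : (1 - α/8)*L*(s + K*ε) = s*L - (α/8)*L*s + (1 - α/8)*(K*(ε*L)) := by ring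
      have hX0 : 0 ≤ K*(ε*L) :=
        mul_nonneg hK.le (mul_nonneg hε0.le (by linarith only [hL1]))
      have h7a : (1 - α/8)*(K*(ε*L)) ≤ K*(ε*L) :=
        mul_le_of_le_one_left hX0 (by linarith only [hα0])
      have h7b : K*(ε*L) ≤ K*1 := mul_le_mul_of_nonneg_left hεL hK.le
      have h8 : (α/8)*L*1 ≤ (α/8)*L*s := mul_le_mul_of_nonneg_left hs1 hαL8
      linarith only [hkey, h1, h2, h6, h7a, h7b, h8, hcase, hTdef, hcK, hK]
    have hApne : A.Nonempty := by
      by_contra hcon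
      rw [Set.not_nonempty_iff_eq_empty] at hcon
      rw [hadef, hcon] at ha_pos
      simp at ha_pos
    obtain ⟨p, hp⟩ := hApne
    refine ⟨p, ?_⟩
    have hsub : {x : ℝ × ℝ | ε ^ (1 - α) ≤ vnorm (x - p)} ⊆ Aᶜ := by
      intro x hx hxA
      simp only [Set.mem_setOf_eq] at hx
      have hd := hpair x hxA p hp
      have hsplit : δα = ε ^ ((1:ℝ) - α) * ε ^ (α/2) := by
        rw [hδαdef, ← Real.rpow_add hε0]
        congr 1; ring
      have hlog4le3 : Real.log 4 ≤ 3 := by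
        have h9 := Real.log_le_sub_one_of_pos (by norm_num : (0:ℝ) < 4)
        linarith only [h9]
      have hexp : ε ^ (α/2) ≤ 1/4 := by
        rw [Real.rpow_def_of_pos hε0]
        have hle : Real.log 4 ≤ (α/2)*L := by
          linarith only [hcase, hTdef, hlog4le3, hK, hcK]
        have hlogε : Real.log ε = -L := by linarith only [hLneg]
        have hq : Real.log ε * (α/2) ≤ Real.log (1/4) := by
          rw [one_div, Real.log_inv, hlogε]
          linarith only [hle]
        calc Real.exp (Real.log ε * (α/2)) ≤ Real.exp (Real.log (1/4)) :=
              Real.exp_le_exp.mpr hq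
          _ = 1/4 := Real.exp_log (by norm_num)
      have hpos : 0 < ε ^ ((1:ℝ) - α) := Real.rpow_pos_of_pos hε0 _
      have hlt : 2*δα < ε ^ ((1:ℝ) - α) := by
        rw [hsplit]
        nlinarith only [hexp, hpos, Real.rpow_pos_of_pos hε0 (α/2)]
      have hee : ε ^ (1 - α) = ε ^ ((1:ℝ) - α) := rfl
      rw [hee] at hx
      linarith only [hx, hd, hlt]
    have hmono : (∫ x in {x : ℝ × ℝ | ε ^ (1 - α) ≤ vnorm (x - p)}, jap x * w x) ≤ b := by
      rw [hbdef]
      apply setIntegral_mono_set hjw_int.integrableOn (ae_restrict_of_ae hjw0)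
      exact HasSubset.Subset.eventuallyLE hsub
    have hbound : ((α/8)*L + c₁)*b ≤ N := by
      have ha_eq : a = m - b := by linarith only [hab]
      rw [ha_eq] at hkey
      have h1 : (1 - α/8)*L*m + ((α/8)*L + c₁)*(m - b) = (L + c₁)*m - ((α/8)*L + c₁)*b := by
        ring
      have h2 : (L + c₁)*m ≤ (L + c₁)*(s + K*ε) :=
        mul_le_mul_of_nonneg_left hm_le (by linarith only [hL1, hc₁1])
      have h3 : (L + c₁)*(s + K*ε) = s*L + s*c₁ + K*(ε*L) + K*(ε*c₁) := by ring
      have h4 : K*(ε*L) ≤ K*1 := mul_le_mul_of_nonneg_left hεL hK.le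
      have h5 : K*(ε*c₁) ≤ K*(1*c₁) := mul_le_mul_of_nonneg_left
        (mul_le_mul_of_nonneg_right (by linarith only [hε1]) (by linarith only [hc₁1]))
        hK.le
      have h6 : s*c₁ ≤ 2*c₁ := mul_le_mul_of_nonneg_right hsle2 (by linarith only [hc₁1])
      rw [hNdef]
      linarith only [hkey, h1, h2, h3, h4, h5, h6]
    rw [le_div_iff₀ hαL0]
    have h7 : (α/8)*L*b ≤ ((α/8)*L + c₁)*b :=
      mul_le_mul_of_nonneg_right (by linarith only [hc₁1]) hb0
    calc (∫ x in {x : ℝ × ℝ | ε ^ (1 - α) ≤ vnorm (x - p)}, jap x * w x) * (α*L)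
        ≤ b * (α*L) := mul_le_mul_of_nonneg_right hmono hαL0.le
      _ = 8*((α/8)*L*b) := by ring
      _ ≤ 8*(((α/8)*L + c₁)*b) := by linarith only [h7]
      _ ≤ 8*N := by linarith only [hbound]
      _ ≤ C := by
          rw [hCdef]
          have h8 : 0 ≤ (K+2)*T := mul_nonneg (by linarith only [hK]) hT0.le
          linarith only [h8]
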